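/- arXiv:1910.06206 — 6 statements merged into one kernel-verified Lean document; each statement's English description precedes it below -/
import Mathlib

section
/- In any tiling of the D-dimensional unit hypercube by more than one axis-aligned subhypercube, each of the 2^D corners of the unit hypercube lies in a distinct tile; consequently any nontrivial tiling uses at least 2^D tiles. -/
noncomputable section

def Cube {D t : ℕ} (c : Fin t → Fin D → ℝ) (s : Fin t → ℝ) (i : Fin t) :
    Set (Fin D → ℝ) :=
  Set.Icc (c i) (fun d => c i d + s i)

/-- `IsTiling D t L c s` : the `t` axis-aligned closed hypercubes with corners `c i` and
side lengths `s i` have pairwise disjoint interiors and union the cube `[0,L]^D`. -/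
def IsTiling (D t : ℕ) (L : ℝ) (c : Fin t → Fin D → ℝ) (s : Fin t → ℝ) : Prop :=
  (∀ i, 0 < s i) ∧
  (∀ i j, i ≠ j → Disjoint (interior (Cube c s i)) (interior (Cube c s j))) ∧
  (⋃ i, Cube c s i) = Set.Icc (0 : Fin D → ℝ) (fun _ => L)

/-- `t` is `D`-admissible: the unit hypercube can be tiled by exactly `t` subcubes. -/
def Admissible (D t : ℕ) : Prop := ∃ c s, IsTiling D t 1 c s

lemma Fintype_aux {t : ℕ} (i : Fin t) (ht : 1 < t) : ∃ j : Fin t, j ≠ i := by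
  have : 1 < Fintype.card (Fin t) := by simpa using ht
  exact Fintype.exists_ne_of_one_lt_card this i

theorem stmt2 (D t : ℕ) (c : Fin t → Fin D → ℝ) (s : Fin t → ℝ)
    (h : IsTiling D t 1 c s) (ht : 1 < t) :
    (∃ f : (Fin D → Bool) → Fin t, Function.Injective f ∧
      ∀ ε : Fin D → Bool, (fun d => if ε d then (1 : ℝ) else 0) ∈ Cube c s (f ε)) ∧
    2 ^ D ≤ t := by
  obtain ⟨hs, hdisj, hunion⟩ := h
  have hcorner : ∀ ε : Fin D → Bool,
      (fun d => if ε d then (1:ℝ) else 0) ∈ Set.Icc (0 : Fin D → ℝ) (fun _ => 1) := by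
    intro ε
    constructor <;> intro d <;> simp only [Pi.zero_apply] <;> split <;> norm_num
  have hsub : ∀ i, Cube c s i ⊆ Set.Icc (0 : Fin D → ℝ) (fun _ => 1) := by
    intro i; rw [← hunion]; exact Set.subset_iUnion _ i
  have hmem : ∀ ε : Fin D → Bool, ∃ i, (fun d => if ε d then (1:ℝ) else 0) ∈ Cube c s i := by
    intro ε
    have := hcorner ε
    rw [← hunion] at this
    exact Set.mem_iUnion.mp this
  choose f hf using hmem
  -- lower and upper corner facts
  have hlo : ∀ i d, 0 ≤ c i d := by
    intro i d
    have : c i ∈ Cube c s i := ⟨le_refl _, fun d => by dsimp only; linarith [(hs i).le]⟩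
    exact (hsub i this).1 d
  have hhi : ∀ i d, c i d + s i ≤ 1 := by
    intro i d
    have : (fun d => c i d + s i) ∈ Cube c s i := ⟨fun d => by dsimp only; linarith [(hs i).le], le_refl _⟩
    exact (hsub i this).2 d
  have hinj : Function.Injective f := by
    intro ε ε' heq
    by_contra hne
    obtain ⟨d, hd⟩ := Function.ne_iff.mp hne
    set i := f ε with hi
    have h1 : c i ≤ (fun d => if ε d then (1:ℝ) else 0) ∧
        (fun d => if ε d then (1:ℝ) else 0) ≤ fun d => c i d + s i := hf ε
    have h2 : c i ≤ (fun d => if ε' d then (1:ℝ) else 0) ∧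
        (fun d => if ε' d then (1:ℝ) else 0) ≤ fun d => c i d + s i := by
      have := hf ε'; rw [← heq] at this; exact this
    -- one of ε d, ε' d is true and the other false
    have key : c i d ≤ 0 ∧ 1 ≤ c i d + s i := by
      have a1 := h1.1 d; have a2 := h1.2 d; have b1 := h2.1 d; have b2 := h2.2 d
      simp only at a1 a2 b1 b2
      cases hεd : ε d <;> cases hε'd : ε' d <;> rw [hεd] at a1 a2 hd <;>
        rw [hε'd] at b1 b2 hd <;> simp_all
    have hs1 : s i = 1 := by linarith [key.1, key.2, hhi i d, hlo i d]
    have hc0 : ∀ d', c i d' = 0 := by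
      intro d'; have := hhi i d'; have := hlo i d'; linarith
    obtain ⟨j, hj⟩ := Fintype_aux i ht
    -- midpoint of cube j
    set m : Fin D → ℝ := fun d' => c j d' + s j / 2 with hm
    have hmj : m ∈ interior (Cube c s j) := by
      have hopen : IsOpen (Set.pi Set.univ fun d' => Set.Ioo (c j d') (c j d' + s j)) :=
        isOpen_set_pi Set.finite_univ fun d' _ => isOpen_Ioo
      apply interior_mono (s := Set.pi Set.univ fun d' => Set.Ioo (c j d') (c j d' + s j))
      · intro x hx
        exact ⟨fun d' => ((hx d' (Set.mem_univ d')).1).le,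
          fun d' => ((hx d' (Set.mem_univ d')).2).le⟩
      · rw [hopen.interior_eq]
        intro d' _
        constructor <;> simp only [hm] <;> linarith [hs j]
    have hmi : m ∈ interior (Cube c s i) := by
      have hopen : IsOpen (Set.pi Set.univ fun _ : Fin D => Set.Ioo (0:ℝ) 1) :=
        isOpen_set_pi Set.finite_univ fun d' _ => isOpen_Ioo
      apply interior_mono (s := Set.pi Set.univ fun _ : Fin D => Set.Ioo (0:ℝ) 1)
      · intro x hx
        refine ⟨fun d' => ?_, fun d' => ?_⟩
        · rw [hc0 d']; exact ((hx d' (Set.mem_univ d')).1).le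
        · dsimp only; rw [hc0 d', hs1]; linarith [(hx d' (Set.mem_univ d')).2]
      · rw [hopen.interior_eq]
        intro d' _
        have h1 := hlo j d'
        have h2 := hhi j d'
        have h3 := hs j
        constructor <;> simp only [hm] <;> linarith
    exact (hdisj i j (Ne.symm hj)).ne_of_mem hmi hmj rfl
  refine ⟨⟨f, hinj, hf⟩, ?_⟩
  calc 2 ^ D = Fintype.card (Fin D → Bool) := by simp
    _ ≤ Fintype.card (Fin t) := Fintype.card_le_of_injective f hinj
    _ = t := Fintype.card_fin t
end
end

section
/- There is no tiling of the unit square by exactly 5 axis-aligned squares. -/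
noncomputable section

open MeasureTheory Set

lemma cube_interior (c : Fin 5 → Fin 2 → ℝ) (s : Fin 5 → ℝ) (i : Fin 5) :
    interior (Cube c s i) = Set.pi Set.univ (fun d => Set.Ioo (c i d) (c i d + s i)) := by
  rw [Cube, ← Set.pi_univ_Icc, interior_pi_set Set.finite_univ]
  simp [interior_Icc]

lemma cube_volume (c : Fin 5 → Fin 2 → ℝ) (s : Fin 5 → ℝ) (hs : ∀ i, 0 < s i) (i : Fin 5) :
    volume (Cube c s i) = ENNReal.ofReal (s i ^ 2) := by
  rw [Cube, Real.volume_Icc_pi]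
  simp [sq, ENNReal.ofReal_mul (hs i).le]

lemma fin2aux : ∀ (e e' d : Fin 2), e ≠ e' → d = e ∨ d = e' := by decide

lemma cube_bounds (c : Fin 5 → Fin 2 → ℝ) (s : Fin 5 → ℝ) (hs : ∀ i, 0 < s i)
    (hcov : (⋃ i, Cube c s i) = Set.Icc (0 : Fin 2 → ℝ) (fun _ => 1)) (i : Fin 5) (d : Fin 2) :
    0 ≤ c i d ∧ c i d + s i ≤ 1 := by
  have hsub : Cube c s i ⊆ Set.Icc (0 : Fin 2 → ℝ) (fun _ => 1) := hcov ▸ Set.subset_iUnion _ i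
  have h1 : c i ∈ Cube c s i :=
    Set.left_mem_Icc.2 (fun d => le_add_of_nonneg_right (hs i).le)
  have h2 : (fun d => c i d + s i) ∈ Cube c s i :=
    Set.right_mem_Icc.2 (fun d => le_add_of_nonneg_right (hs i).le)
  exact ⟨(hsub h1).1 d, (hsub h2).2 d⟩

lemma eq_of_overlap (c : Fin 5 → Fin 2 → ℝ) (s : Fin 5 → ℝ)
    (hd : ∀ i j, i ≠ j → Disjoint (interior (Cube c s i)) (interior (Cube c s j)))
    {i j : Fin 5}
    (h : ∀ d, max (c i d) (c j d) < min (c i d + s i) (c j d + s j)) : i = j := by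
  by_contra hij
  set p : Fin 2 → ℝ := fun d => (max (c i d) (c j d) + min (c i d + s i) (c j d + s j)) / 2 with hp
  have hpi : p ∈ interior (Cube c s i) := by
    rw [cube_interior]
    intro d _
    have h1 := h d
    have h2 := le_max_left (c i d) (c j d)
    have h3 := min_le_left (c i d + s i) (c j d + s j)
    constructor <;> simp only [hp] <;> linarith
  have hpj : p ∈ interior (Cube c s j) := by
    rw [cube_interior]
    intro d _
    have h1 := h d
    have h2 := le_max_right (c i d) (c j d)
    have h3 := min_le_right (c i d + s i) (c j d + s j)
    constructor <;> simp only [hp] <;> linarith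
  exact Set.disjoint_left.1 (hd i j hij) hpi hpj

lemma cube_aedisjoint (c : Fin 5 → Fin 2 → ℝ) (s : Fin 5 → ℝ)
    (hd : ∀ i j, i ≠ j → Disjoint (interior (Cube c s i)) (interior (Cube c s j)))
    {i j : Fin 5} (hij : i ≠ j) : volume (Cube c s i ∩ Cube c s j) = 0 := by
  by_contra h0
  apply hij
  apply eq_of_overlap c s hd
  intro d
  rw [Cube, Cube, Set.Icc_inter_Icc, Real.volume_Icc_pi] at h0
  have := Finset.prod_ne_zero_iff.1 h0 d (Finset.mem_univ d)
  rw [Ne, ENNReal.ofReal_eq_zero, not_le] at this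
  simp only [Pi.inf_apply, Pi.sup_apply] at this
  linarith

lemma sum_sq (c : Fin 5 → Fin 2 → ℝ) (s : Fin 5 → ℝ) (hs : ∀ i, 0 < s i)
    (hd : ∀ i j, i ≠ j → Disjoint (interior (Cube c s i)) (interior (Cube c s j)))
    (hcov : (⋃ i, Cube c s i) = Set.Icc (0 : Fin 2 → ℝ) (fun _ => 1)) :
    ∑ i, s i ^ 2 = 1 := by
  have key : volume (⋃ i, Cube c s i) = ∑' i, volume (Cube c s i) :=
    measure_iUnion₀ (fun i j hij => cube_aedisjoint c s hd hij)
      (fun i => measurableSet_Icc.nullMeasurableSet)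
  rw [hcov, tsum_fintype] at key
  rw [Real.volume_Icc_pi] at key
  simp only [cube_volume c s hs, Pi.zero_apply, sub_zero, ENNReal.ofReal_one,
    Finset.prod_const_one] at key
  rw [← ENNReal.ofReal_sum_of_nonneg (fun i _ => sq_nonneg (s i))] at key
  have := ENNReal.ofReal_eq_one.mp key.symm
  linarith [this]

lemma edge_sum (c : Fin 5 → Fin 2 → ℝ) (s : Fin 5 → ℝ) (hs : ∀ i, 0 < s i)
    (hd : ∀ i j, i ≠ j → Disjoint (interior (Cube c s i)) (interior (Cube c s j)))
    (hcov : (⋃ i, Cube c s i) = Set.Icc (0 : Fin 2 → ℝ) (fun _ => 1))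
    (e e' : Fin 2) (hee : e ≠ e') (v : ℝ) (hv : v = 0 ∨ v = 1) :
    ∑ i ∈ Finset.univ.filter (fun i => v ∈ Set.Icc (c i e) (c i e + s i)), s i = 1 := by
  classical
  set B := Finset.univ.filter (fun i : Fin 5 => v ∈ Set.Icc (c i e) (c i e + s i)) with hB
  have hv01 : 0 ≤ v ∧ v ≤ 1 := by rcases hv with h | h <;> simp [h]
  have hbd := cube_bounds c s hs hcov
  set f : Fin 5 → Set ℝ := fun i => Set.Icc (c i e') (c i e' + s i) with hf
  have hcov1 : (⋃ i ∈ B, f i) = Set.Icc (0:ℝ) 1 := by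
    apply Set.Subset.antisymm
    · refine Set.iUnion₂_subset fun i _ => ?_
      intro x hx
      exact ⟨le_trans (hbd i e').1 hx.1, le_trans hx.2 (hbd i e').2⟩
    · intro x hx
      set p : Fin 2 → ℝ := fun d => if d = e then v else x with hp
      have hpmem : p ∈ Set.Icc (0 : Fin 2 → ℝ) (fun _ => 1) := by
        constructor
        · intro d
          show (0:ℝ) ≤ if d = e then v else x
          split
          · exact hv01.1
          · exact hx.1
        · intro d
          show (if d = e then v else x) ≤ 1
          split
          · exact hv01.2
          · exact hx.2
      rw [← hcov] at hpmem
      obtain ⟨i, hi⟩ := Set.mem_iUnion.1 hpmem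
      have hpe : p e = v := by simp [hp]
      have hpe' : p e' = x := by simp [hp, hee.symm]
      have hie : c i e ≤ v ∧ v ≤ c i e + s i := by
        refine ⟨?_, ?_⟩
        · rw [← hpe]; exact hi.1 e
        · rw [← hpe]; exact hi.2 e
      refine Set.mem_iUnion₂.2 ⟨i, ?_, ?_⟩
      · simp only [hB, Finset.mem_filter, Finset.mem_univ, true_and]
        exact ⟨hie.1, hie.2⟩
      · exact ⟨by rw [← hpe']; exact hi.1 e', by rw [← hpe']; exact hi.2 e'⟩
  have hdisj : (↑B : Set (Fin 5)).Pairwise (Function.onFun (MeasureTheory.AEDisjoint volume) f) := by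
    intro i hiB j hjB hij
    have hiB' : c i e ≤ v ∧ v ≤ c i e + s i := by
      simpa [hB, Set.mem_Icc] using hiB
    have hjB' : c j e ≤ v ∧ v ≤ c j e + s j := by
      simpa [hB, Set.mem_Icc] using hjB
    show volume (Set.Icc (c i e') (c i e' + s i) ∩ Set.Icc (c j e') (c j e' + s j)) = 0
    rw [Set.Icc_inter_Icc, Real.volume_Icc, ENNReal.ofReal_eq_zero]
    by_contra hpos
    push_neg at hpos
    apply hij
    apply eq_of_overlap c s hd
    intro d
    rcases fin2aux e e' d hee with rfl | rfl
    · rcases hv with rfl | rfl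
      · have h1 : c i d = 0 := le_antisymm hiB'.1 (hbd i d).1
        have h2 : c j d = 0 := le_antisymm hjB'.1 (hbd j d).1
        rw [h1, h2, max_self, lt_min_iff]
        constructor <;> linarith [hs i, hs j]
      · have h1 : c i d + s i = 1 := le_antisymm (hbd i d).2 hiB'.2
        have h2 : c j d + s j = 1 := le_antisymm (hbd j d).2 hjB'.2
        rw [h1, h2, min_self, max_lt_iff]
        constructor <;> linarith [hs i, hs j]
    · linarith [hpos]
  have hmeas := measure_biUnion_finset₀ hdisj (fun i _ => measurableSet_Icc.nullMeasurableSet)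
  rw [hcov1, Real.volume_Icc, sub_zero, ENNReal.ofReal_one] at hmeas
  have hvol : ∀ i ∈ B, volume (f i) = ENNReal.ofReal (s i) := by
    intro i _
    show volume (Set.Icc (c i e') (c i e' + s i)) = _
    rw [Real.volume_Icc]
    congr 1
    ring
  rw [Finset.sum_congr rfl hvol,
    ← ENNReal.ofReal_sum_of_nonneg (fun i _ => (hs i).le)] at hmeas
  exact ENNReal.ofReal_eq_one.mp hmeas.symm

lemma side_lt_one (c : Fin 5 → Fin 2 → ℝ) (s : Fin 5 → ℝ) (hs : ∀ i, 0 < s i)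
    (hd : ∀ i j, i ≠ j → Disjoint (interior (Cube c s i)) (interior (Cube c s j)))
    (hcov : (⋃ i, Cube c s i) = Set.Icc (0 : Fin 2 → ℝ) (fun _ => 1)) (i : Fin 5) :
    s i < 1 := by
  have hbd := cube_bounds c s hs hcov
  have hle : s i ≤ 1 := by linarith [(hbd i 0).1, (hbd i 0).2]
  rcases lt_or_eq_of_le hle with h | h
  · exact h
  · exfalso
    obtain ⟨j, hj⟩ := exists_ne i
    have hsub : ({j, i} : Finset (Fin 5)) ⊆ Finset.univ := Finset.subset_univ _
    have hsum : ∑ k ∈ ({j, i} : Finset (Fin 5)), s k ^ 2 ≤ ∑ k, s k ^ 2 :=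
      Finset.sum_le_sum_of_subset_of_nonneg hsub (fun k _ _ => sq_nonneg (s k))
    rw [Finset.sum_insert (by simp [hj]), Finset.sum_singleton] at hsum
    rw [sum_sq c s hs hd hcov] at hsum
    nlinarith [hs j, h]

lemma sum_five (f : Fin 5 → ℝ) (a b d e g : Fin 5)
    (huniv : (Finset.univ : Finset (Fin 5)) = {a, b, d, e, g})
    (h1 : a ∉ ({b, d, e, g} : Finset (Fin 5))) (h2 : b ∉ ({d, e, g} : Finset (Fin 5)))
    (h3 : d ∉ ({e, g} : Finset (Fin 5))) (h4 : e ∉ ({g} : Finset (Fin 5))) :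
    ∑ i, f i = f a + f b + f d + f e + f g := by
  rw [huniv, Finset.sum_insert h1, Finset.sum_insert h2, Finset.sum_insert h3,
    Finset.sum_insert h4, Finset.sum_singleton]
  ring

theorem stmt4 : ¬ Admissible 2 5 := by
  rintro ⟨c, s, hs, hd, hcov⟩
  have hbd := cube_bounds c s hs hcov
  have hlt := side_lt_one c s hs hd hcov
  -- corner squares
  have corner : ∀ v : Fin 2 → ℝ, (∀ d, v d = 0 ∨ v d = 1) →
      ∃ i, ∀ d, (v d = 0 → c i d = 0) ∧ (v d = 1 → c i d + s i = 1) := by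
    intro v hv
    have hmem : v ∈ Set.Icc (0 : Fin 2 → ℝ) (fun _ => 1) := by
      constructor <;> intro d <;> rcases hv d with h | h <;> simp [h]
    rw [← hcov] at hmem
    obtain ⟨i, hi⟩ := Set.mem_iUnion.1 hmem
    refine ⟨i, fun d => ⟨fun h0 => ?_, fun h1 => ?_⟩⟩
    · refine le_antisymm ?_ (hbd i d).1
      rw [← h0]; exact hi.1 d
    · refine le_antisymm (hbd i d).2 ?_
      rw [← h1]; exact hi.2 d
  obtain ⟨bl, hblc⟩ := corner (fun _ => 0) (fun d => Or.inl rfl)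
  obtain ⟨br, hbrc⟩ := corner (fun d => if d = 0 then 1 else 0)
    (fun d => by by_cases h : d = 0 <;> simp [h])
  obtain ⟨tl, htlc⟩ := corner (fun d => if d = 0 then 0 else 1)
    (fun d => by by_cases h : d = 0 <;> simp [h])
  obtain ⟨tr, htrc⟩ := corner (fun _ => 1) (fun d => Or.inr rfl)
  have hbl0 : c bl 0 = 0 := (hblc 0).1 rfl
  have hbl1 : c bl 1 = 0 := (hblc 1).1 rfl
  have hbr0 : c br 0 + s br = 1 := (hbrc 0).2 (if_pos rfl)
  have hbr1 : c br 1 = 0 := (hbrc 1).1 (if_neg (by decide))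
  have htl0 : c tl 0 = 0 := (htlc 0).1 (if_pos rfl)
  have htl1 : c tl 1 + s tl = 1 := (htlc 1).2 (if_neg (by decide))
  have htr0 : c tr 0 + s tr = 1 := (htrc 0).2 rfl
  have htr1 : c tr 1 + s tr = 1 := (htrc 1).2 rfl
  -- distinctness of corner squares
  have n1 : bl ≠ br := by intro h; rw [h] at hbl0; have := hlt br; linarith
  have n2 : bl ≠ tl := by intro h; rw [h] at hbl1; have := hlt tl; linarith
  have n3 : bl ≠ tr := by intro h; rw [h] at hbl0; have := hlt tr; linarith
  have n4 : br ≠ tl := by intro h; rw [h] at hbr0; have := hlt tl; linarith [htl0]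
  have n5 : br ≠ tr := by intro h; rw [h] at hbr1; have := hlt tr; linarith
  have n6 : tl ≠ tr := by intro h; rw [h] at htl0; have := hlt tr; linarith
  -- the fifth square
  obtain ⟨E, hE⟩ : ∃ E : Fin 5, E ∉ ({bl, br, tl, tr} : Finset (Fin 5)) := by
    by_contra h
    push_neg at h
    have huniv := Finset.eq_univ_iff_forall.2 h
    have c1 := Finset.card_insert_le bl ({br, tl, tr} : Finset (Fin 5))
    have c2 := Finset.card_insert_le br ({tl, tr} : Finset (Fin 5))
    have c3 := Finset.card_insert_le tl ({tr} : Finset (Fin 5))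
    have c4 : ({tr} : Finset (Fin 5)).card = 1 := Finset.card_singleton tr
    rw [huniv, Finset.card_univ, Fintype.card_fin] at c1
    omega
  simp only [Finset.mem_insert, Finset.mem_singleton] at hE
  push_neg at hE
  obtain ⟨e1, e2, e3, e4⟩ := hE
  have huniv : (Finset.univ : Finset (Fin 5)) = {bl, br, tl, tr, E} := by
    symm
    apply Finset.eq_univ_of_card
    rw [Finset.card_insert_of_notMem (by simp [n1, n2, n3, e1.symm]),
      Finset.card_insert_of_notMem (by simp [n4, n5, e2.symm]),
      Finset.card_insert_of_notMem (by simp [n6, e3.symm]),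
      Finset.card_insert_of_notMem (by simp [e4.symm]),
      Finset.card_singleton, Fintype.card_fin]
  have hin1 : bl ∉ ({br, tl, tr, E} : Finset (Fin 5)) := by simp [n1, n2, n3, e1.symm]
  have hin2 : br ∉ ({tl, tr, E} : Finset (Fin 5)) := by simp [n4, n5, e2.symm]
  have hin3 : tl ∉ ({tr, E} : Finset (Fin 5)) := by simp [n6, e3.symm]
  have hin4 : tr ∉ ({E} : Finset (Fin 5)) := by simp [e4.symm]
  -- area equation
  have hA := sum_sq c s hs hd hcov
  rw [sum_five (fun i => s i ^ 2) bl br tl tr E huniv hin1 hin2 hin3 hin4] at hA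
  -- the four edge equations
  have hB := edge_sum c s hs hd hcov 1 0 (by decide) 0 (Or.inl rfl)
  have hT := edge_sum c s hs hd hcov 1 0 (by decide) 1 (Or.inr rfl)
  have hL := edge_sum c s hs hd hcov 0 1 (by decide) 0 (Or.inl rfl)
  have hR := edge_sum c s hs hd hcov 0 1 (by decide) 1 (Or.inr rfl)
  rw [Finset.sum_filter,
    sum_five _ bl br tl tr E huniv hin1 hin2 hin3 hin4] at hB hT hL hR
  rw [if_pos (show (0:ℝ) ∈ Set.Icc (c bl 1) (c bl 1 + s bl) by
        constructor <;> linarith [hs bl]),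
      if_pos (show (0:ℝ) ∈ Set.Icc (c br 1) (c br 1 + s br) by
        constructor <;> linarith [hs br]),
      if_neg (show (0:ℝ) ∉ Set.Icc (c tl 1) (c tl 1 + s tl) by
        rintro ⟨u1, u2⟩; linarith [(hbd tl 1).1, hlt tl]),
      if_neg (show (0:ℝ) ∉ Set.Icc (c tr 1) (c tr 1 + s tr) by
        rintro ⟨u1, u2⟩; linarith [(hbd tr 1).1, hlt tr])] at hB
  rw [if_neg (show (1:ℝ) ∉ Set.Icc (c bl 1) (c bl 1 + s bl) by
        rintro ⟨u1, u2⟩; linarith [hlt bl]),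
      if_neg (show (1:ℝ) ∉ Set.Icc (c br 1) (c br 1 + s br) by
        rintro ⟨u1, u2⟩; linarith [hlt br]),
      if_pos (show (1:ℝ) ∈ Set.Icc (c tl 1) (c tl 1 + s tl) by
        constructor <;> linarith [hs tl]),
      if_pos (show (1:ℝ) ∈ Set.Icc (c tr 1) (c tr 1 + s tr) by
        constructor <;> linarith [hs tr])] at hT
  rw [if_pos (show (0:ℝ) ∈ Set.Icc (c bl 0) (c bl 0 + s bl) by
        constructor <;> linarith [hs bl]),
      if_neg (show (0:ℝ) ∉ Set.Icc (c br 0) (c br 0 + s br) by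
        rintro ⟨u1, u2⟩; linarith [(hbd br 0).1, hlt br]),
      if_pos (show (0:ℝ) ∈ Set.Icc (c tl 0) (c tl 0 + s tl) by
        constructor <;> linarith [hs tl]),
      if_neg (show (0:ℝ) ∉ Set.Icc (c tr 0) (c tr 0 + s tr) by
        rintro ⟨u1, u2⟩; linarith [(hbd tr 0).1, hlt tr])] at hL
  rw [if_neg (show (1:ℝ) ∉ Set.Icc (c bl 0) (c bl 0 + s bl) by
        rintro ⟨u1, u2⟩; linarith [hlt bl]),
      if_pos (show (1:ℝ) ∈ Set.Icc (c br 0) (c br 0 + s br) by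
        constructor <;> linarith [hs br]),
      if_neg (show (1:ℝ) ∉ Set.Icc (c tl 0) (c tl 0 + s tl) by
        rintro ⟨u1, u2⟩; linarith [hlt tl]),
      if_pos (show (1:ℝ) ∈ Set.Icc (c tr 0) (c tr 0 + s tr) by
        constructor <;> linarith [hs tr])] at hR
  -- translations of the fifth square touching an edge
  have cB : (0:ℝ) ∈ Set.Icc (c E 1) (c E 1 + s E) → c E 1 = 0 :=
    fun h => le_antisymm h.1 (hbd E 1).1
  have cT : (1:ℝ) ∈ Set.Icc (c E 1) (c E 1 + s E) → c E 1 + s E = 1 :=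
    fun h => le_antisymm (hbd E 1).2 h.2
  have cL : (0:ℝ) ∈ Set.Icc (c E 0) (c E 0 + s E) → c E 0 = 0 :=
    fun h => le_antisymm h.1 (hbd E 0).1
  have cR : (1:ℝ) ∈ Set.Icc (c E 0) (c E 0 + s E) → c E 0 + s E = 1 :=
    fun h => le_antisymm (hbd E 0).2 h.2
  have hd01 : ∀ d : Fin 2, d = 0 ∨ d = 1 := by decide
  -- E cannot share a corner with a corner square
  have share00 : c E 0 = 0 → c E 1 = 0 → False := by
    intro h0 h1
    apply e1
    apply eq_of_overlap c s hd
    intro d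
    rcases hd01 d with rfl | rfl
    · rw [h0, hbl0, max_self, lt_min_iff]
      constructor <;> linarith [hs E, hs bl]
    · rw [h1, hbl1, max_self, lt_min_iff]
      constructor <;> linarith [hs E, hs bl]
  have share10 : c E 0 + s E = 1 → c E 1 = 0 → False := by
    intro h0 h1
    apply e2
    apply eq_of_overlap c s hd
    intro d
    rcases hd01 d with rfl | rfl
    · rw [h0, hbr0, min_self, max_lt_iff]
      constructor <;> linarith [hs E, hs br]
    · rw [h1, hbr1, max_self, lt_min_iff]
      constructor <;> linarith [hs E, hs br]
  have share01 : c E 0 = 0 → c E 1 + s E = 1 → False := by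
    intro h0 h1
    apply e3
    apply eq_of_overlap c s hd
    intro d
    rcases hd01 d with rfl | rfl
    · rw [h0, htl0, max_self, lt_min_iff]
      constructor <;> linarith [hs E, hs tl]
    · rw [h1, htl1, min_self, max_lt_iff]
      constructor <;> linarith [hs E, hs tl]
  have share11 : c E 0 + s E = 1 → c E 1 + s E = 1 → False := by
    intro h0 h1
    apply e4
    apply eq_of_overlap c s hd
    intro d
    rcases hd01 d with rfl | rfl
    · rw [h0, htr0, min_self, max_lt_iff]
      constructor <;> linarith [hs E, hs tr]
    · rw [h1, htr1, min_self, max_lt_iff]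
      constructor <;> linarith [hs E, hs tr]
  -- case analysis on which edge set E belongs to
  by_cases mB : (0:ℝ) ∈ Set.Icc (c E 1) (c E 1 + s E)
  · have nT : (1:ℝ) ∉ Set.Icc (c E 1) (c E 1 + s E) := by
      intro h; have := cB mB; have := cT h; linarith [hlt E]
    have nL : (0:ℝ) ∉ Set.Icc (c E 0) (c E 0 + s E) :=
      fun h => share00 (cL h) (cB mB)
    have nR : (1:ℝ) ∉ Set.Icc (c E 0) (c E 0 + s E) :=
      fun h => share10 (cR h) (cB mB)
    rw [if_pos mB] at hB
    rw [if_neg nT] at hT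
    rw [if_neg nL] at hL
    rw [if_neg nR] at hR
    linarith [hs E]
  · by_cases mT : (1:ℝ) ∈ Set.Icc (c E 1) (c E 1 + s E)
    · have nL : (0:ℝ) ∉ Set.Icc (c E 0) (c E 0 + s E) :=
        fun h => share01 (cL h) (cT mT)
      have nR : (1:ℝ) ∉ Set.Icc (c E 0) (c E 0 + s E) :=
        fun h => share11 (cR h) (cT mT)
      rw [if_neg mB] at hB
      rw [if_pos mT] at hT
      rw [if_neg nL] at hL
      rw [if_neg nR] at hR
      linarith [hs E]
    · by_cases mL : (0:ℝ) ∈ Set.Icc (c E 0) (c E 0 + s E)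
      · have nR : (1:ℝ) ∉ Set.Icc (c E 0) (c E 0 + s E) := by
          intro h; have := cL mL; have := cR h; linarith [hlt E]
        rw [if_neg mB] at hB
        rw [if_neg mT] at hT
        rw [if_pos mL] at hL
        rw [if_neg nR] at hR
        linarith [hs E]
      · by_cases mR : (1:ℝ) ∈ Set.Icc (c E 0) (c E 0 + s E)
        · rw [if_neg mB] at hB
          rw [if_neg mT] at hT
          rw [if_neg mL] at hL
          rw [if_pos mR] at hR
          linarith [hs E]
        · rw [if_neg mB] at hB
          rw [if_neg mT] at hT
          rw [if_neg mL] at hL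
          rw [if_neg mR] at hR
          have g1 : s br = 1 - s bl := by linarith
          have g2 : s tl = 1 - s bl := by linarith
          have g3 : s tr = s bl := by linarith
          rw [g1, g2, g3] at hA
          nlinarith [sq_nonneg (2 * s bl - 1), mul_pos (hs E) (hs E)]
end
end

section
/- For every D ≥ 1 there exists an integer A_D such that every integer t > A_D is D-admissible, i.e., the unit D-hypercube can be tiled by exactly t axis-aligned hypercubes. In fact one may take A_D = 2^{D^2+D}. -/
noncomputable section

lemma interior_box {D : ℕ} (a b : Fin D → ℝ) :
    interior (Set.Icc a b) = Set.pi Set.univ (fun d => Set.Ioo (a d) (b d)) := by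
  rw [← Set.pi_univ_Icc, interior_pi_set Set.finite_univ]
  simp [interior_Icc]

lemma mem_interior_box {D : ℕ} {a b z : Fin D → ℝ} :
    z ∈ interior (Set.Icc a b) ↔ ∀ d, a d < z d ∧ z d < b d := by
  rw [interior_box]; simp [Set.mem_pi]

lemma admissible_pos {D t : ℕ} (h : Admissible D t) : 1 ≤ t := by
  obtain ⟨c, s, _, _, hu⟩ := h
  by_contra h0
  have ht : t = 0 := by omega
  subst ht
  have : (0 : Fin D → ℝ) ∈ Set.Icc (0 : Fin D → ℝ) (fun _ => (1:ℝ)) := by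
    constructor
    · exact le_refl _
    · intro d; norm_num
  rw [← hu] at this
  simpa using this

lemma grid_aux {k : ℕ} (hk0 : (0:ℝ) < k) {u v : ℕ} (h : u < v) {z : ℝ}
    (h2 : z < u / k + 1 / k) (h3 : (v:ℝ)/k < z) : False := by
  have h1 : ((u:ℝ) + 1) ≤ v := by exact_mod_cast h
  have hd : ((u:ℝ)+1)/k ≤ (v:ℝ)/k := by gcongr
  rw [← add_div] at h2
  linarith

lemma admissible_pow (D k : ℕ) (hk : 1 ≤ k) : Admissible D (k ^ D) := by
  have hk0 : (0:ℝ) < k := by exact_mod_cast hk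
  set e := (finFunctionFinEquiv : (Fin D → Fin k) ≃ Fin (k ^ D)) with he
  refine ⟨fun i d => (e.symm i d : ℝ) / k, fun _ => 1 / k, fun i => by positivity, ?_, ?_⟩
  · intro i j hij
    have hv : e.symm i ≠ e.symm j := fun h => hij (e.symm.injective h)
    obtain ⟨d, hd⟩ : ∃ d, e.symm i d ≠ e.symm j d := by
      by_contra h; push_neg at h; exact hv (funext h)
    rw [Set.disjoint_left]
    intro z hz hz'
    rw [Cube, mem_interior_box] at hz hz'
    obtain ⟨h1, h2⟩ := hz d
    obtain ⟨h3, h4⟩ := hz' d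
    rcases lt_or_gt_of_ne (fun h : (e.symm i d : ℕ) = e.symm j d => hd (Fin.ext h)) with hlt | hlt
    · exact grid_aux hk0 hlt h2 h3
    · exact grid_aux hk0 hlt h4 h1
  · apply subset_antisymm
    · apply Set.iUnion_subset
      intro i z hz
      obtain ⟨hz1, hz2⟩ := hz
      constructor
      · intro d
        have : (0:ℝ) ≤ (e.symm i d : ℝ)/k := by positivity
        exact le_trans this (hz1 d)
      · intro d
        have hle : ((e.symm i d : ℕ):ℝ) + 1 ≤ k := by
          exact_mod_cast Nat.succ_le_of_lt (e.symm i d).isLt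
        have h2 := hz2 d
        simp only at h2
        calc z d ≤ (e.symm i d : ℝ)/k + 1/k := h2
          _ = ((e.symm i d : ℝ) + 1)/k := by ring
          _ ≤ (k:ℝ)/k := by gcongr
          _ = 1 := div_self (ne_of_gt hk0)
    · intro z hz
      obtain ⟨hz1, hz2⟩ := hz
      have hv : ∀ d, min (⌊(k:ℝ) * z d⌋₊) (k-1) < k := by
        intro d; have : k - 1 < k := by omega
        exact lt_of_le_of_lt (min_le_right _ _) this
      set v : Fin D → Fin k := fun d => ⟨min (⌊(k:ℝ) * z d⌋₊) (k-1), hv d⟩ with hvdef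
      refine Set.mem_iUnion.mpr ⟨e v, ?_⟩
      rw [Cube, Set.mem_Icc]
      simp only [Equiv.symm_apply_apply]
      constructor
      · intro d
        have h0 : (0:ℝ) ≤ (k:ℝ) * z d := mul_nonneg (le_of_lt hk0) (hz1 d)
        have h1 : ((v d : ℕ):ℝ) ≤ (k:ℝ) * z d := by
          have hm : (v d : ℕ) ≤ ⌊(k:ℝ) * z d⌋₊ := min_le_left _ _
          calc ((v d : ℕ):ℝ) ≤ (⌊(k:ℝ) * z d⌋₊ : ℝ) := by exact_mod_cast hm
            _ ≤ (k:ℝ) * z d := Nat.floor_le h0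
        rw [div_le_iff₀ hk0]
        linarith [h1]
      · intro d
        simp only
        have key : (k:ℝ) * z d ≤ (v d : ℕ) + 1 := by
          by_cases hc : ⌊(k:ℝ) * z d⌋₊ ≤ k - 1
          · have hvd : (v d : ℕ) = ⌊(k:ℝ) * z d⌋₊ := min_eq_left hc
            rw [hvd]
            exact le_of_lt (Nat.lt_floor_add_one _)
          · have hvd : (v d : ℕ) = k - 1 := min_eq_right (le_of_not_ge hc)
            have hz2d : z d ≤ 1 := hz2 d
            have : ((v d : ℕ):ℝ) + 1 = k := by
              rw [hvd]
              have : (k - 1 : ℕ) + 1 = k := by omega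
              exact_mod_cast this
            rw [this]
            nlinarith [hz2d, hk0]
        have : z d ≤ ((v d : ℕ) + 1 : ℝ)/k := by
          rw [le_div_iff₀ hk0]; linarith
        calc z d ≤ ((v d : ℕ) + 1 : ℝ)/k := this
          _ = (v d : ℕ)/k + 1/k := by ring

lemma affine_lt {r x a z : ℝ} (hr : 0 < r) : x + r * a < z ↔ a < (z - x)/r := by
  rw [lt_div_iff₀ hr]; constructor <;> intro <;> nlinarith

lemma affine_lt' {r x a z : ℝ} (hr : 0 < r) : z < x + r * a ↔ (z - x)/r < a := by
  rw [div_lt_iff₀ hr]; constructor <;> intro <;> nlinarith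

lemma affine_le {r x a z : ℝ} (hr : 0 < r) : x + r * a ≤ z ↔ a ≤ (z - x)/r := by
  rw [le_div_iff₀ hr]; constructor <;> intro <;> nlinarith

lemma affine_le' {r x a z : ℝ} (hr : 0 < r) : z ≤ x + r * a ↔ (z - x)/r ≤ a := by
  rw [div_le_iff₀ hr]; constructor <;> intro <;> nlinarith

lemma scaled_tiling {D t : ℕ} {c : Fin t → Fin D → ℝ} {s : Fin t → ℝ}
    (h : IsTiling D t 1 c s) (x : Fin D → ℝ) {r : ℝ} (hr : 0 < r) :
    (∀ i, 0 < r * s i) ∧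
    (∀ i j, i ≠ j →
      Disjoint (interior (Cube (fun i d => x d + r * c i d) (fun i => r * s i) i))
        (interior (Cube (fun i d => x d + r * c i d) (fun i => r * s i) j))) ∧
    (⋃ i, Cube (fun i d => x d + r * c i d) (fun i => r * s i) i)
      = Set.Icc x (fun d => x d + r) := by
  obtain ⟨hs, hdisj, hu⟩ := h
  set ψ : (Fin D → ℝ) → (Fin D → ℝ) := fun z d => (z d - x d)/r with hψ
  have hmemint : ∀ i z, z ∈ interior (Cube (fun i d => x d + r * c i d) (fun i => r * s i) i)
      ↔ ψ z ∈ interior (Cube c s i) := by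
    intro i z
    rw [Cube, Cube, mem_interior_box, mem_interior_box]
    apply forall_congr'
    intro d
    rw [← affine_lt hr]
    constructor
    · rintro ⟨h1, h2⟩
      refine ⟨h1, ?_⟩
      rw [← affine_lt' (a := c i d + s i) hr]
      rw [mul_add] at *
      linarith
    · rintro ⟨h1, h2⟩
      refine ⟨h1, ?_⟩
      rw [← affine_lt' (a := c i d + s i) hr] at h2
      rw [mul_add] at *
      linarith
  have hmem : ∀ i z, z ∈ Cube (fun i d => x d + r * c i d) (fun i => r * s i) i
      ↔ ψ z ∈ Cube c s i := by
    intro i z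
    rw [Cube, Cube, Set.mem_Icc, Set.mem_Icc, Pi.le_def, Pi.le_def, Pi.le_def, Pi.le_def]
    constructor
    · rintro ⟨h1, h2⟩
      constructor
      · intro d; rw [← affine_le hr]; exact h1 d
      · intro d
        rw [← affine_le' (a := c i d + s i) hr, mul_add]
        have := h2 d; linarith
    · rintro ⟨h1, h2⟩
      constructor
      · intro d; have := h1 d; rw [← affine_le hr] at this; exact this
      · intro d
        have := h2 d; rw [← affine_le' (a := c i d + s i) hr, mul_add] at this
        linarith
  refine ⟨fun i => mul_pos hr (hs i), ?_, ?_⟩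
  · intro i j hij
    rw [Set.disjoint_left]
    intro z hz hz'
    rw [hmemint] at hz hz'
    exact Set.disjoint_left.mp (hdisj i j hij) hz hz'
  · ext z
    rw [Set.mem_iUnion]
    constructor
    · rintro ⟨i, hi⟩
      rw [hmem] at hi
      have : ψ z ∈ ⋃ i, Cube c s i := Set.mem_iUnion.mpr ⟨i, hi⟩
      rw [hu, Set.mem_Icc, Pi.le_def, Pi.le_def] at this
      obtain ⟨h1, h2⟩ := this
      rw [Set.mem_Icc, Pi.le_def, Pi.le_def]
      constructor
      · intro d
        have := h1 d
        simp only [hψ, Pi.zero_apply] at this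
        have : x d + r * 0 ≤ z d := (affine_le hr).mpr this
        linarith
      · intro d
        have := h2 d
        simp only [hψ] at this
        have : z d ≤ x d + r * 1 := (affine_le' hr).mpr this
        linarith
    · intro hz
      rw [Set.mem_Icc, Pi.le_def, Pi.le_def] at hz
      obtain ⟨h1, h2⟩ := hz
      have : ψ z ∈ Set.Icc (0 : Fin D → ℝ) (fun _ => (1:ℝ)) := by
        rw [Set.mem_Icc, Pi.le_def, Pi.le_def]
        constructor
        · intro d
          have := h1 d
          rw [show x d = x d + r * 0 by ring, affine_le hr] at this
          simpa using this
        · intro d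
          have := h2 d
          rw [show x d + r = x d + r * 1 by ring, affine_le' hr] at this
          simpa using this
      rw [← hu, Set.mem_iUnion] at this
      obtain ⟨i, hi⟩ := this
      exact ⟨i, (hmem i z).mpr hi⟩

lemma admissible_add {D a u : ℕ} (ha : Admissible D (a + 1)) (hu : Admissible D u) :
    Admissible D (a + u) := by
  obtain ⟨c, s, hs, hdisj, hun⟩ := ha
  obtain ⟨c', s', htu⟩ := hu
  set i0 : Fin (a + 1) := Fin.last a with hi0
  set x : Fin D → ℝ := c i0 with hx
  set r : ℝ := s i0 with hrdef
  have hr : 0 < r := hs i0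
  obtain ⟨hpos2, hdisj2, hun2⟩ := scaled_tiling htu x hr
  set e := (finSumFinEquiv : Fin a ⊕ Fin u ≃ Fin (a + u)) with he
  set C : Fin a ⊕ Fin u → Fin D → ℝ :=
    Sum.elim (fun i => c i.castSucc) (fun j d => x d + r * c' j d) with hC
  set S : Fin a ⊕ Fin u → ℝ :=
    Sum.elim (fun i => s i.castSucc) (fun j => r * s' j) with hS
  refine ⟨fun i => C (e.symm i), fun i => S (e.symm i), ?_, ?_, ?_⟩
  · intro i
    show 0 < S (e.symm i)
    rcases hq : e.symm i with i' | j'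
    · exact hs _
    · exact hpos2 _
  · -- disjointness
    have keyC : ∀ p, Cube (fun i => C (e.symm i)) (fun i => S (e.symm i)) (e p)
        = Set.Icc (C p) (fun d => C p d + S p) := by
      intro p; rw [Cube, Equiv.symm_apply_apply]
    have keyCube : ∀ p, Set.Icc (C p) (fun d => C p d + S p)
        = (match p with
           | Sum.inl i' => Cube c s i'.castSucc
           | Sum.inr j' => Cube (fun j d => x d + r * c' j d) (fun j => r * s' j) j') := by
      rintro (i' | j') <;> rfl
    have hsub : ∀ j', interior (Cube (fun j d => x d + r * c' j d) (fun j => r * s' j) j')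
        ⊆ interior (Cube c s i0) := by
      intro j'
      apply interior_mono
      have : Cube (fun j d => x d + r * c' j d) (fun j => r * s' j) j'
          ⊆ ⋃ j, Cube (fun j d => x d + r * c' j d) (fun j => r * s' j) j :=
        Set.subset_iUnion _ j'
      rw [hun2] at this
      refine this.trans ?_
      rw [Cube]
    intro i j hij
    have hp : e.symm i ≠ e.symm j := fun h => hij (e.symm.injective h)
    have hi : i = e (e.symm i) := (e.apply_symm_apply i).symm
    have hj : j = e (e.symm j) := (e.apply_symm_apply j).symm
    rw [show Cube (fun i => C (e.symm i)) (fun i => S (e.symm i)) i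
        = Set.Icc (C (e.symm i)) (fun d => C (e.symm i) d + S (e.symm i)) from rfl,
      show Cube (fun i => C (e.symm i)) (fun i => S (e.symm i)) j
        = Set.Icc (C (e.symm j)) (fun d => C (e.symm j) d + S (e.symm j)) from rfl,
      keyCube, keyCube]
    rcases hq : e.symm i with i' | j' <;> rcases hq' : e.symm j with i2 | j2
    · apply hdisj
      rw [hq, hq'] at hp
      intro hcon
      exact hp (by rw [Fin.castSucc_injective _ hcon])
    · exact Set.disjoint_of_subset (interior_mono (Set.Subset.refl _)) (hsub j2)
        (hdisj i'.castSucc i0 (by simp [hi0, Fin.ext_iff]; omega))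
    · exact Set.disjoint_of_subset (hsub j') (interior_mono (Set.Subset.refl _))
        ((hdisj i0 i2.castSucc (by simp [hi0, Fin.ext_iff]; omega)))
    · apply hdisj2
      rw [hq, hq'] at hp
      intro hcon
      exact hp (by rw [hcon])
  · -- union
    have : (⋃ i, Cube (fun i => C (e.symm i)) (fun i => S (e.symm i)) i)
        = ⋃ p, Set.Icc (C p) (fun d => C p d + S p) := by
      apply subset_antisymm
      · apply Set.iUnion_subset
        intro i
        exact Set.subset_iUnion_of_subset (e.symm i) (Set.Subset.refl _)
      · apply Set.iUnion_subset
        intro p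
        refine Set.subset_iUnion_of_subset (e p) ?_
        rw [show Cube (fun i => C (e.symm i)) (fun i => S (e.symm i)) (e p)
          = Set.Icc (C (e.symm (e p))) (fun d => C (e.symm (e p)) d + S (e.symm (e p))) from rfl,
          Equiv.symm_apply_apply]
    rw [this, Set.iUnion_sum]
    have h2 : (⋃ j, Set.Icc (C (Sum.inr j)) (fun d => C (Sum.inr j) d + S (Sum.inr j)))
        = Cube c s i0 := by
      have : (⋃ j, Set.Icc (C (Sum.inr j)) (fun d => C (Sum.inr j) d + S (Sum.inr j)))
          = ⋃ j, Cube (fun j d => x d + r * c' j d) (fun j => r * s' j) j := rfl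
      rw [this, hun2, Cube]
    rw [h2]
    have h1 : (⋃ i', Set.Icc (C (Sum.inl i')) (fun d => C (Sum.inl i') d + S (Sum.inl i')))
        = ⋃ i' : Fin a, Cube c s i'.castSucc := rfl
    rw [h1, ← hun]
    apply subset_antisymm
    · apply Set.union_subset
      · apply Set.iUnion_subset
        intro i'
        exact Set.subset_iUnion_of_subset i'.castSucc (Set.Subset.refl _)
      · exact Set.subset_iUnion _ i0
    · apply Set.iUnion_subset
      intro i
      rcases Fin.eq_castSucc_or_eq_last i with ⟨i', hi'⟩ | hlast
      · subst hi'
        exact Set.subset_union_of_subset_left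
          (Set.subset_iUnion (fun i' : Fin a => Cube c s i'.castSucc) i') _
      · rw [hlast]
        exact Set.subset_union_right

lemma admissible_one (D : ℕ) : Admissible D 1 := by
  refine ⟨fun _ _ => 0, fun _ => 1, fun _ => one_pos, ?_, ?_⟩
  · intro i j hij; exact absurd (Subsingleton.elim i j) hij
  · apply subset_antisymm
    · apply Set.iUnion_subset
      intro i z hz
      obtain ⟨h1, h2⟩ := hz
      exact ⟨h1, by intro d; simpa using h2 d⟩
    · intro z hz
      refine Set.mem_iUnion.mpr ⟨0, hz.1, ?_⟩
      intro d; simpa using hz.2 d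

lemma admissible_step {D v : ℕ} (hv : Admissible D v) :
    ∀ n, Admissible D n → Admissible D (n + (v - 1)) := by
  intro n hn
  have hn1 : 1 ≤ n := admissible_pos hn
  have hv1 : 1 ≤ v := admissible_pos hv
  have h1 : Admissible D ((n - 1) + 1) := by
    rwa [show n - 1 + 1 = n by omega]
  have := admissible_add h1 hv
  rwa [show n - 1 + v = n + (v - 1) by omega] at this

lemma admissible_add_mul {D v : ℕ} (hv : Admissible D v) {n : ℕ} (hn : Admissible D n)
    (b : ℕ) : Admissible D (n + b * (v - 1)) := by
  induction b with
  | zero => simpa using hn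
  | succ b ih =>
    have := admissible_step hv _ ih
    rwa [show n + b * (v-1) + (v-1) = n + (b+1) * (v-1) by ring] at this

theorem stmt9 (D : ℕ) (hD : 1 ≤ D) :
    (∃ A : ℕ, ∀ t : ℕ, A < t → Admissible D t) ∧
    (∀ t : ℕ, 2 ^ (D ^ 2 + D) < t → Admissible D t) := by
  have main : ∀ t : ℕ, 2 ^ (D ^ 2 + D) < t → Admissible D t := by
    intro t ht
    set m : ℕ := 2 ^ D - 1 with hm
    set M : ℕ := m ^ D with hM
    have h2D : 2 ≤ 2 ^ D := by
      calc 2 = 2 ^ 1 := (pow_one 2).symm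
        _ ≤ 2 ^ D := Nat.pow_le_pow_right (by norm_num) hD
    have hm1 : 1 ≤ m := by omega
    have hM1 : 1 ≤ M := Nat.one_le_pow _ _ hm1
    have hmM : m ∣ M := dvd_pow_self m (by omega)
    -- key bound : m * M ≤ 2 ^ (D^2 + D)
    have hbound : m * M ≤ 2 ^ (D ^ 2 + D) := by
      have h1 : m ≤ 2 ^ D := by omega
      have h2 : M ≤ (2 ^ D) ^ D := Nat.pow_le_pow_left h1 D
      calc m * M ≤ 2 ^ D * (2 ^ D) ^ D := Nat.mul_le_mul h1 h2
        _ = 2 ^ (D + D * D) := by rw [← pow_mul, ← pow_add]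
        _ = 2 ^ (D ^ 2 + D) := by ring_nf
    set r : ℕ := (t - 1) % m with hr
    set q : ℕ := (t - 1) / m with hq
    have hqr : m * q + r = t - 1 := Nat.div_add_mod _ _
    have hrm : r < m := Nat.mod_lt _ (by omega)
    set b : ℕ := if r = 0 then 0 else m - r with hb
    have hble : b ≤ m := by rw [hb]; split <;> omega
    have hblt : b * (M - 1) ≤ t - 1 := by
      calc b * (M - 1) ≤ m * M := Nat.mul_le_mul hble (by omega)
        _ ≤ 2 ^ (D ^ 2 + D) := hbound
        _ ≤ t - 1 := by omega
    have hdvd : m ∣ (t - 1) - b * (M - 1) := by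
      obtain ⟨P, hP⟩ := hmM
      have hcast : ((t - 1 : ℕ) : ℤ) - (b : ℤ) * ((M : ℤ) - 1) = ((t - 1 - b * (M-1) : ℕ) : ℤ) := by
        push_cast [Nat.cast_sub hblt, Nat.cast_sub hM1]
        ring
      have hint : (m : ℤ) ∣ ((t - 1 : ℕ) : ℤ) - (b : ℤ) * ((M : ℤ) - 1) := by
        have hMint : (M : ℤ) = m * P := by exact_mod_cast hP
        have htint : ((t - 1 : ℕ) : ℤ) = m * q + r := by exact_mod_cast hqr.symm
        by_cases hr0 : r = 0
        · have hbz : (b : ℤ) = 0 := by simp [hb, hr0]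
          rw [hbz, htint, hr0]
          push_cast
          ring_nf
          exact Dvd.intro q rfl
        · have hbz : (b : ℤ) = m - r := by
            rw [hb]; simp [hr0]
            push_cast [Nat.cast_sub (le_of_lt hrm)]
            ring
          rw [hbz, htint, hMint]
          refine ⟨q + 1 - (m - r) * P, by ring⟩
      rw [hcast] at hint
      exact_mod_cast hint
    set a : ℕ := ((t - 1) - b * (M - 1)) / m with ha
    have ham : a * m = (t - 1) - b * (M - 1) := Nat.div_mul_cancel hdvd
    have hteq : t = 1 + b * (M - 1) + a * m := by omega
    have base : Admissible D (1 + b * (M - 1)) := by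
      have hMadm : Admissible D M := admissible_pow D m hm1
      exact admissible_add_mul hMadm (admissible_one D) b
    have h2adm : Admissible D (2 ^ D) := admissible_pow D 2 (by norm_num)
    have final := admissible_add_mul h2adm base a
    rw [show 1 + b * (M-1) + a * (2^D - 1) = 1 + b * (M-1) + a * m from rfl] at final
    rwa [hteq]
  exact ⟨⟨2 ^ (D ^ 2 + D), main⟩, main⟩
end
end

section
/- Let S ⊆ ℕ be closed under the operation (t,s) ↦ t+s−1, with 1 ∈ S, 2^D ∈ S, and (2^D−1)^D ∈ S. Then S contains every integer greater than 2^{D^2+D}. -/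
noncomputable section

theorem stmt11 (D : ℕ) (hD : 1 ≤ D) (S : Set ℕ)
    (hclosed : ∀ t ∈ S, ∀ s ∈ S, t + s - 1 ∈ S)
    (h1 : 1 ∈ S) (h2 : 2 ^ D ∈ S) (h3 : (2 ^ D - 1) ^ D ∈ S) :
    ∀ n : ℕ, 2 ^ (D ^ 2 + D) < n → n ∈ S := by
  intro n hn
  have hA2 : 2 ≤ 2 ^ D := by
    calc (2:ℕ) = 2 ^ 1 := (pow_one 2).symm
    _ ≤ 2 ^ D := Nat.pow_le_pow_right (by norm_num) hD
  set a : ℕ := 2 ^ D - 1 with ha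
  have ha1 : 1 ≤ a := by omega
  have haD : 1 ≤ a ^ D := Nat.one_le_pow _ _ ha1
  set b : ℕ := a ^ D - 1 with hb
  have hbD : a ^ D = b + 1 := by omega
  have key : ∀ k l : ℕ, k * a + l * b + 1 ∈ S := by
    intro k l
    induction k with
    | zero =>
      induction l with
      | zero => simpa using h1
      | succ l ih =>
        have hmem := hclosed _ ih _ h3
        have heq : 0 * a + (l + 1) * b + 1 = 0 * a + l * b + 1 + a ^ D - 1 := by
          rw [add_mul, one_mul, hbD]; omega
        rw [heq]; exact hmem
    | succ k ih =>
      have hmem := hclosed _ ih _ h2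
      have heq : (k + 1) * a + l * b + 1 = k * a + l * b + 1 + 2 ^ D - 1 := by
        rw [add_mul, one_mul]; omega
      rw [heq]; exact hmem
  have hm0 : 2 ^ (D ^ 2 + D) ≤ n - 1 := by omega
  set m := n - 1 with hmdef
  obtain ⟨q, r, hqr, hr⟩ : ∃ q r, m = a * q + r ∧ r < a :=
    ⟨m / a, m % a, (Nat.div_add_mod m a).symm, Nat.mod_lt _ (by omega)⟩
  set l : ℕ := if r = 0 then 0 else a - r with hl
  have hla : l ≤ a - 1 := by rw [hl]; split <;> omega
  have hdvd1 : a ∣ m + l := by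
    rw [hl]; split
    · exact ⟨q, by omega⟩
    · exact ⟨q + 1, by rw [Nat.mul_add]; omega⟩
  have hdvd2 : a ∣ l * b + l := by
    have he : l * b + l = l * a ^ D := by rw [hbD]; ring
    rw [he]
    exact Dvd.dvd.mul_left (dvd_pow_self a (by omega : D ≠ 0)) l
  have hb2 : b ≤ 2 ^ (D ^ 2) := by
    have h := Nat.pow_le_pow_left (show a ≤ 2 ^ D by omega) D
    calc b ≤ a ^ D := by omega
    _ ≤ (2 ^ D) ^ D := h
    _ = 2 ^ (D ^ 2) := by rw [← pow_mul, pow_two]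
  have hlb : l * b ≤ m := by
    calc l * b ≤ 2 ^ D * 2 ^ (D ^ 2) := Nat.mul_le_mul (by omega) hb2
    _ = 2 ^ (D ^ 2 + D) := by rw [← pow_add, Nat.add_comm]
    _ ≤ m := hm0
  have hdvd3 : a ∣ m - l * b := by
    have hd := Nat.dvd_sub hdvd1 hdvd2
    have e : (m + l) - (l * b + l) = m - l * b := by omega
    rwa [e] at hd
  obtain ⟨k, hk⟩ := hdvd3
  have hmk : m = a * k + l * b := Nat.eq_add_of_sub_eq hlb hk
  have hn1 : 0 < n := lt_of_le_of_lt (Nat.zero_le _) hn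
  have hn' : n = a * k + l * b + 1 := by omega
  rw [hn', mul_comm a k]
  exact key k l
end
end

section
/- The volume identity 9^4 = 5^4 + 4^4 + 57·3^4 + 38·2^4 + 455 holds, and there is a corresponding tiling of a 9×9×9×9 hypercube by one 5-cube, one 4-cube, 57 3-cubes, 38 2-cubes, and 455 unit 4-dimensional cubes, giving a tiling of the tesseract into exactly 552 hypercubes. -/
set_option maxRecDepth 100000
set_option maxHeartbeats 1000000

noncomputable section

namespace S15

def lo : Fin 11 → Fin 4 → ℕ :=
  ![![0,6,0,0], ![0,0,6,0], ![0,0,0,6], ![0,0,0,0], ![0,5,0,0], ![0,0,5,0],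
    ![0,0,0,5], ![5,0,0,0], ![5,4,0,0], ![5,0,4,0], ![5,0,0,4]]

def num : Fin 11 → Fin 4 → ℕ :=
  ![![3,1,3,3], ![3,2,1,3], ![3,2,2,1], ![1,1,1,1], ![5,1,6,6], ![5,5,1,6],
    ![5,5,5,1], ![1,1,1,1], ![2,1,3,3], ![2,2,1,3], ![2,2,2,1]]

def gs : Fin 11 → ℕ := ![3,3,3,5,1,1,1,4,2,2,2]

abbrev I : Type := Σ b : Fin 11, ∀ d : Fin 4, Fin (num b d)

def corn (j : I) (d : Fin 4) : ℕ := lo j.1 d + gs j.1 * (j.2 d : ℕ)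

lemma hcard : Fintype.card I = 552 := by decide

def eqv : I ≃ Fin 552 := Fintype.equivFinOfCardEq hcard

def cR : Fin 552 → Fin 4 → ℝ := fun i d => (corn (eqv.symm i) d : ℝ)
def sR : Fin 552 → ℝ := fun i => (gs (eqv.symm i).1 : ℝ)

lemma gs_pos : ∀ b, 0 < gs b := by decide

lemma boxsep : ∀ b b' : Fin 11, b ≠ b' → ∃ d,
    lo b d + gs b * num b d ≤ lo b' d ∨ lo b' d + gs b' * num b' d ≤ lo b d := by decide

lemma box_hi : ∀ b d, lo b d + gs b * num b d ≤ 9 := by decide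

lemma cube_in_box (b : Fin 11) (k : ∀ d : Fin 4, Fin (num b d)) (d : Fin 4) :
    lo b d ≤ corn ⟨b, k⟩ d ∧ corn ⟨b, k⟩ d + gs b ≤ lo b d + gs b * num b d := by
  show lo b d ≤ lo b d + gs b * (k d : ℕ) ∧
    lo b d + gs b * (k d : ℕ) + gs b ≤ lo b d + gs b * num b d
  refine ⟨Nat.le_add_right _ _, ?_⟩
  have h : (k d : ℕ) + 1 ≤ num b d := (k d).2
  have h2 := Nat.mul_le_mul_left (gs b) h
  rw [Nat.mul_add, Nat.mul_one] at h2
  omega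

lemma cube_in_box' (j : I) (d : Fin 4) :
    lo j.1 d ≤ corn j d ∧ corn j d + gs j.1 ≤ lo j.1 d + gs j.1 * num j.1 d := by
  obtain ⟨b, k⟩ := j
  exact cube_in_box b k d

lemma sepN : ∀ j j' : I, j ≠ j' → ∃ d,
    corn j d + gs j.1 ≤ corn j' d ∨ corn j' d + gs j'.1 ≤ corn j d := by
  rintro ⟨b, k⟩ ⟨b', k'⟩ hne
  by_cases hb : b = b'
  · subst hb
    have hk : k ≠ k' := by rintro rfl; exact hne rfl
    have hd : ∃ d, (k d : ℕ) ≠ (k' d : ℕ) := by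
      by_contra h
      push_neg at h
      exact hk (funext fun d => Fin.val_injective (h d))
    obtain ⟨d, hd⟩ := hd
    refine ⟨d, ?_⟩
    show lo b d + gs b * (k d : ℕ) + gs b ≤ lo b d + gs b * (k' d : ℕ) ∨
      lo b d + gs b * (k' d : ℕ) + gs b ≤ lo b d + gs b * (k d : ℕ)
    rcases Nat.lt_or_ge (k d : ℕ) (k' d : ℕ) with h | h
    · left
      have h3 := Nat.mul_le_mul_left (gs b) (show (k d : ℕ) + 1 ≤ (k' d : ℕ) by omega)
      rw [Nat.mul_add, Nat.mul_one] at h3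
      omega
    · right
      have h3 := Nat.mul_le_mul_left (gs b) (show (k' d : ℕ) + 1 ≤ (k d : ℕ) by omega)
      rw [Nat.mul_add, Nat.mul_one] at h3
      omega
  · obtain ⟨d, hd⟩ := boxsep b b' hb
    refine ⟨d, ?_⟩
    show corn ⟨b, k⟩ d + gs b ≤ corn ⟨b', k'⟩ d ∨ corn ⟨b', k'⟩ d + gs b' ≤ corn ⟨b, k⟩ d
    have h1 := cube_in_box b k d
    have h2 := cube_in_box b' k' d
    rcases hd with hd | hd
    · left; omega
    · right; omega

def mkk (b : Fin 11) (kv : Fin 4 → ℕ) (h : ∀ d, kv d < num b d) : I :=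
  ⟨b, fun d => ⟨kv d, h d⟩⟩

lemma leaf (v : Fin 4 → ℕ) (b : Fin 11) (lob numb : Fin 4 → ℕ) (gsb : ℕ)
    (hl : lo b = lob) (hn : num b = numb) (hg : gs b = gsb)
    (kv : Fin 4 → ℕ) (hk : ∀ d, kv d < numb d)
    (hcov : ∀ d, lob d + gsb * kv d ≤ v d ∧ v d + 1 ≤ lob d + gsb * kv d + gsb) :
    ∃ j : I, ∀ d, corn j d ≤ v d ∧ v d + 1 ≤ corn j d + gs j.1 := by
  refine ⟨mkk b kv (fun d => by rw [hn]; exact hk d), fun d => ?_⟩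
  show lo b d + gs b * kv d ≤ v d ∧ v d + 1 ≤ lo b d + gs b * kv d + gs b
  rw [hl, hg]
  exact hcov d

lemma coverN : ∀ v : Fin 4 → ℕ, (∀ d, v d < 9) → ∃ j : I, ∀ d,
    corn j d ≤ v d ∧ v d + 1 ≤ corn j d + gs j.1 := by
  intro v hv
  have h0 := hv 0; have h1 := hv 1; have h2 := hv 2; have h3 := hv 3
  by_cases c1 : 6 ≤ v 1
  · exact leaf v 0 ![0,6,0,0] ![3,1,3,3] 3 rfl rfl rfl ![v 0 / 3, 0, v 2 / 3, v 3 / 3]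
      (fun d => by fin_cases d <;> simp <;> omega)
      (fun d => by fin_cases d <;> simp <;> omega)
  by_cases c2 : 6 ≤ v 2
  · exact leaf v 1 ![0,0,6,0] ![3,2,1,3] 3 rfl rfl rfl ![v 0 / 3, v 1 / 3, 0, v 3 / 3]
      (fun d => by fin_cases d <;> simp <;> omega)
      (fun d => by fin_cases d <;> simp <;> omega)
  by_cases c3 : 6 ≤ v 3
  · exact leaf v 2 ![0,0,0,6] ![3,2,2,1] 3 rfl rfl rfl ![v 0 / 3, v 1 / 3, v 2 / 3, 0]
      (fun d => by fin_cases d <;> simp <;> omega)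
      (fun d => by fin_cases d <;> simp <;> omega)
  by_cases c0 : v 0 < 5
  · by_cases e1 : 5 ≤ v 1
    · exact leaf v 4 ![0,5,0,0] ![5,1,6,6] 1 rfl rfl rfl ![v 0, 0, v 2, v 3]
        (fun d => by fin_cases d <;> simp <;> omega)
        (fun d => by fin_cases d <;> simp <;> omega)
    by_cases e2 : 5 ≤ v 2
    · exact leaf v 5 ![0,0,5,0] ![5,5,1,6] 1 rfl rfl rfl ![v 0, v 1, 0, v 3]
        (fun d => by fin_cases d <;> simp <;> omega)
        (fun d => by fin_cases d <;> simp <;> omega)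
    by_cases e3 : 5 ≤ v 3
    · exact leaf v 6 ![0,0,0,5] ![5,5,5,1] 1 rfl rfl rfl ![v 0, v 1, v 2, 0]
        (fun d => by fin_cases d <;> simp <;> omega)
        (fun d => by fin_cases d <;> simp <;> omega)
    · exact leaf v 3 ![0,0,0,0] ![1,1,1,1] 5 rfl rfl rfl ![0, 0, 0, 0]
        (fun d => by fin_cases d <;> simp)
        (fun d => by fin_cases d <;> simp <;> omega)
  · by_cases e1 : 4 ≤ v 1
    · exact leaf v 8 ![5,4,0,0] ![2,1,3,3] 2 rfl rfl rfl ![(v 0 - 5) / 2, 0, v 2 / 2, v 3 / 2]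
        (fun d => by fin_cases d <;> simp <;> omega)
        (fun d => by fin_cases d <;> simp <;> omega)
    by_cases e2 : 4 ≤ v 2
    · exact leaf v 9 ![5,0,4,0] ![2,2,1,3] 2 rfl rfl rfl ![(v 0 - 5) / 2, v 1 / 2, 0, v 3 / 2]
        (fun d => by fin_cases d <;> simp <;> omega)
        (fun d => by fin_cases d <;> simp <;> omega)
    by_cases e3 : 4 ≤ v 3
    · exact leaf v 10 ![5,0,0,4] ![2,2,2,1] 2 rfl rfl rfl ![(v 0 - 5) / 2, v 1 / 2, v 2 / 2, 0]
        (fun d => by fin_cases d <;> simp <;> omega)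
        (fun d => by fin_cases d <;> simp <;> omega)
    · exact leaf v 7 ![5,0,0,0] ![1,1,1,1] 4 rfl rfl rfl ![0, 0, 0, 0]
        (fun d => by fin_cases d <;> simp)
        (fun d => by fin_cases d <;> simp <;> omega)

lemma interior_cube (i : Fin 552) :
    interior (Cube cR sR i) = Set.pi Set.univ fun d => Set.Ioo (cR i d) (cR i d + sR i) := by
  rw [Cube, ← Set.pi_univ_Icc, interior_pi_set Set.finite_univ]
  simp [interior_Icc]

lemma tiling : IsTiling 4 552 9 cR sR := by
  refine ⟨?_, ?_, ?_⟩
  · intro i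
    have := gs_pos (eqv.symm i).1
    unfold sR
    exact_mod_cast this
  · intro i j hij
    have hne : eqv.symm i ≠ eqv.symm j := fun h => hij (by
      have := congrArg eqv h
      simpa using this)
    obtain ⟨d, hd⟩ := sepN _ _ hne
    rw [Set.disjoint_left]
    intro x hxi hxj
    rw [interior_cube] at hxi hxj
    have h1 := hxi d (Set.mem_univ d)
    have h2 := hxj d (Set.mem_univ d)
    simp only [Set.mem_Ioo] at h1 h2
    unfold cR sR at h1 h2
    rcases hd with hd | hd
    · have hc : (corn (eqv.symm i) d : ℝ) + (gs (eqv.symm i).1 : ℝ) ≤ (corn (eqv.symm j) d : ℝ) := by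
        exact_mod_cast hd
      linarith
    · have hc : (corn (eqv.symm j) d : ℝ) + (gs (eqv.symm j).1 : ℝ) ≤ (corn (eqv.symm i) d : ℝ) := by
        exact_mod_cast hd
      linarith
  · ext x
    simp only [Set.mem_iUnion]
    constructor
    · rintro ⟨i, hx⟩
      rw [Cube, Set.mem_Icc] at hx
      rw [Set.mem_Icc]
      constructor
      · intro d
        have hle := hx.1 d
        have h0 : (0 : ℝ) ≤ (corn (eqv.symm i) d : ℝ) := Nat.cast_nonneg _
        exact le_trans h0 hle
      · intro d
        have hx2 := hx.2 d
        have hin := cube_in_box' (eqv.symm i) d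
        have hhi := box_hi (eqv.symm i).1 d
        have h9 : (corn (eqv.symm i) d : ℝ) + (gs (eqv.symm i).1 : ℝ) ≤ 9 := by
          exact_mod_cast le_trans hin.2 hhi
        calc x d ≤ cR i d + sR i := hx2
          _ ≤ (9 : ℝ) := h9
    · intro hx
      rw [Set.mem_Icc] at hx
      have hx1 : ∀ d, (0 : ℝ) ≤ x d := fun d => hx.1 d
      have hx2 : ∀ d, x d ≤ 9 := fun d => hx.2 d
      set v : Fin 4 → ℕ := fun d => min 8 (⌊x d⌋.toNat) with hv
      have hvlt : ∀ d, v d < 9 := fun d =>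
        lt_of_le_of_lt (min_le_left _ _) (by norm_num)
      have hfl : ∀ d, (0 : ℤ) ≤ ⌊x d⌋ := fun d => Int.floor_nonneg.mpr (hx1 d)
      have hvle : ∀ d, (v d : ℝ) ≤ x d := by
        intro d
        have hle1 : (v d : ℤ) ≤ ⌊x d⌋ := by
          have hm : v d = min 8 (⌊x d⌋.toNat) := rfl
          have hf := hfl d
          have := min_le_right 8 (⌊x d⌋.toNat)
          omega
        calc (v d : ℝ) = ((v d : ℤ) : ℝ) := by push_cast; ring
          _ ≤ (⌊x d⌋ : ℝ) := by exact_mod_cast hle1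
          _ ≤ x d := Int.floor_le _
      have hvup : ∀ d, x d ≤ (v d : ℝ) + 1 := by
        intro d
        rcases le_or_gt (⌊x d⌋.toNat) 8 with h | h
        · have hveq : v d = ⌊x d⌋.toNat := min_eq_right h
          have hlt : x d < (⌊x d⌋ : ℝ) + 1 := Int.lt_floor_add_one _
          have h3 : ((⌊x d⌋.toNat : ℕ) : ℝ) = ((⌊x d⌋ : ℤ) : ℝ) := by
            rw [← Int.cast_natCast, Int.toNat_of_nonneg (hfl d)]
          rw [hveq, h3]
          linarith
        · have hveq : v d = 8 := min_eq_left (by omega)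
          rw [hveq]
          push_cast
          linarith [hx2 d]
      obtain ⟨j, hj⟩ := coverN v hvlt
      refine ⟨eqv j, ?_⟩
      rw [Cube, Set.mem_Icc]
      constructor
      · intro d
        have hc1 := (hj d).1
        show cR (eqv j) d ≤ x d
        unfold cR
        rw [Equiv.symm_apply_apply]
        calc (corn j d : ℝ) ≤ (v d : ℝ) := by exact_mod_cast hc1
          _ ≤ x d := hvle d
      · intro d
        have hc2 := (hj d).2
        have hc2' : (v d : ℝ) + 1 ≤ (corn j d : ℝ) + (gs j.1 : ℝ) := by exact_mod_cast hc2
        show x d ≤ cR (eqv j) d + sR (eqv j)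
        unfold cR sR
        rw [Equiv.symm_apply_apply]
        linarith [hvup d]

lemma count (k : ℕ) (n : ℕ) (h : Fintype.card {j : I // gs j.1 = k} = n) :
    Nat.card {i : Fin 552 // sR i = (k : ℝ)} = n := by
  have e1 : {i : Fin 552 // sR i = (k : ℝ)} ≃ {j : I // gs j.1 = k} :=
    (Equiv.subtypeEquiv (q := fun j : I => (gs j.1 : ℝ) = (k : ℝ)) eqv.symm
      (fun i => Iff.rfl)).trans
    (Equiv.subtypeEquivRight (fun j => Nat.cast_inj))
  rw [Nat.card_congr e1, Nat.card_eq_fintype_card, h]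

end S15

theorem stmt15 :
    (9 ^ 4 = 5 ^ 4 + 4 ^ 4 + 57 * 3 ^ 4 + 38 * 2 ^ 4 + 455) ∧
    ∃ (c : Fin 552 → Fin 4 → ℝ) (s : Fin 552 → ℝ), IsTiling 4 552 9 c s ∧
      Nat.card {i : Fin 552 // s i = 5} = 1 ∧
      Nat.card {i : Fin 552 // s i = 4} = 1 ∧
      Nat.card {i : Fin 552 // s i = 3} = 57 ∧
      Nat.card {i : Fin 552 // s i = 2} = 38 ∧
      Nat.card {i : Fin 552 // s i = 1} = 455 := by
  refine ⟨by norm_num, S15.cR, S15.sR, S15.tiling, ?_, ?_, ?_, ?_, ?_⟩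
  · have := S15.count 5 1 (by decide)
    simpa using this
  · have := S15.count 4 1 (by decide)
    simpa using this
  · have := S15.count 3 57 (by decide)
    simpa using this
  · have := S15.count 2 38 (by decide)
    simpa using this
  · have := S15.count 1 455 (by decide)
    simpa using this
end
end

section
/- The cube of side 9 can be tiled by one cube of side 5, three cubes of side 4, seven cubes of side 3, twenty-two cubes of side 2, and forty-seven unit cubes; in particular 9^3 = 5^3 + 3·4^3 + 7·3^3 + 22·2^3 + 47. -/
set_option maxRecDepth 10000

noncomputable section

def tdata : Fin 80 → ℕ × ℕ × ℕ × ℕ := ![(0,0,0,5),(5,0,0,4),(0,5,0,4),(0,0,5,4),(0,4,6,3),(3,4,6,3),(4,6,0,3),(4,6,3,3),(6,0,4,3),(6,3,6,3),(6,6,6,3),(0,5,4,2),(0,7,4,2),(0,7,6,2),(2,5,4,2),(2,7,4,2),(2,7,6,2),(4,0,5,2),(4,0,7,2),(4,2,5,2),(4,2,7,2),(4,7,6,2),(5,4,0,2),(5,4,2,2),(5,4,4,2),(6,0,7,2),(7,3,4,2),(7,4,0,2),(7,4,2,2),(7,5,4,2),(7,6,0,2),(7,6,2,2),(7,7,4,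2),(4,5,0,1),(7,8,0,1),(8,8,0,1),(4,5,1,1),(7,8,1,1),(8,8,1,1),(4,5,2,1),(7,8,2,1),(8,8,2,1),(4,5,3,1),(7,8,3,1),(8,8,3,1),(5,0,4,1),(5,1,4,1),(5,2,4,1),(5,3,4,1),(6,3,4,1),(4,5,4,1),(6,3,5,1),(0,4,5,1),(1,4,5,1),(2,4,5,1),(3,4,5,1),(4,4,5,1),(4,5,5,1),(8,0,7,1),(8,1,7,1),(6,2,7,1),(7,2,7,1),(8,2,7,1),(8,0,8,1),(8,1,8,1),(6,2,8,1),(7,2,8,1),(8,2,8,1),(0,7,8,1),(1,7,8,1),(2,7,8,1),(3,7,8,1),(4,7,8,1),(5,7,8,1),(0,8,8,1),(1,8,8,1),(2,8,8,1),(3,8,8,1),(4,8,8,1),(5,8,8,1)]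

def cN (i : Fin 80) : Fin 3 → ℕ := ![(tdata i).1, (tdata i).2.1, (tdata i).2.2.1]
def sN (i : Fin 80) : ℕ := (tdata i).2.2.2

def cR (i : Fin 80) (d : Fin 3) : ℝ := (cN i d : ℝ)
def sR (i : Fin 80) : ℝ := (sN i : ℝ)

theorem hpos : ∀ i, 1 ≤ sN i := by decide

theorem hbound : ∀ i, ∀ d : Fin 3, cN i d + sN i ≤ 9 := by decide

theorem hcell : ∀ x y z : Fin 9,
    (Finset.univ.filter (fun i : Fin 80 =>
      cN i 0 ≤ x.val ∧ x.val + 1 ≤ cN i 0 + sN i ∧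
      cN i 1 ≤ y.val ∧ y.val + 1 ≤ cN i 1 + sN i ∧
      cN i 2 ≤ z.val ∧ z.val + 1 ≤ cN i 2 + sN i)).card = 1 := by decide

theorem huniq (v : Fin 3 → ℕ) (hv : ∀ d, v d < 9) :
    ∃! i : Fin 80, ∀ d : Fin 3, cN i d ≤ v d ∧ v d + 1 ≤ cN i d + sN i := by
  have h := hcell ⟨v 0, hv 0⟩ ⟨v 1, hv 1⟩ ⟨v 2, hv 2⟩
  obtain ⟨a, ha⟩ := Finset.card_eq_one.mp h
  have hamem : a ∈ Finset.univ.filter (fun i : Fin 80 =>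
      cN i 0 ≤ v 0 ∧ v 0 + 1 ≤ cN i 0 + sN i ∧
      cN i 1 ≤ v 1 ∧ v 1 + 1 ≤ cN i 1 + sN i ∧
      cN i 2 ≤ v 2 ∧ v 2 + 1 ≤ cN i 2 + sN i) := ha ▸ Finset.mem_singleton_self a
  have hap := (Finset.mem_filter.mp hamem).2
  refine ⟨a, ?_, ?_⟩
  · intro d
    fin_cases d
    · exact ⟨hap.1, hap.2.1⟩
    · exact ⟨hap.2.2.1, hap.2.2.2.1⟩
    · exact ⟨hap.2.2.2.2.1, hap.2.2.2.2.2⟩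
  · intro j hj
    have hjmem : j ∈ Finset.univ.filter (fun i : Fin 80 =>
        cN i 0 ≤ v 0 ∧ v 0 + 1 ≤ cN i 0 + sN i ∧
        cN i 1 ≤ v 1 ∧ v 1 + 1 ≤ cN i 1 + sN i ∧
        cN i 2 ≤ v 2 ∧ v 2 + 1 ≤ cN i 2 + sN i) :=
      Finset.mem_filter.mpr ⟨Finset.mem_univ _,
        (hj 0).1, (hj 0).2, (hj 1).1, (hj 1).2, (hj 2).1, (hj 2).2⟩
    rw [ha, Finset.mem_singleton] at hjmem
    exact hjmem

theorem mem_interior_cube {i : Fin 80} {x : Fin 3 → ℝ} (hx : x ∈ interior (Cube cR sR i)) :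
    ∀ d, cR i d < x d ∧ x d < cR i d + sR i := by
  have h1 : Cube cR sR i = Set.pi Set.univ (fun d => Set.Icc (cR i d) (cR i d + sR i)) := by
    rw [Set.pi_univ_Icc]; rfl
  rw [h1, interior_pi_set Set.finite_univ] at hx
  intro d
  have h2 : x d ∈ interior (Set.Icc (cR i d) (cR i d + sR i)) := hx d (Set.mem_univ d)
  rwa [interior_Icc, Set.mem_Ioo] at h2

theorem tiling : IsTiling 3 80 9 cR sR := by
  refine ⟨?_, ?_, ?_⟩
  · intro i
    have h := hpos i
    have : (1 : ℝ) ≤ sN i := by exact_mod_cast h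
    simp only [sR]
    linarith
  · intro i j hij
    rw [Set.disjoint_left]
    intro x hxi hxj
    have hi := mem_interior_cube hxi
    have hj := mem_interior_cube hxj
    have key : ∀ k : Fin 80, (∀ d, cR k d < x d ∧ x d < cR k d + sR k) →
        ∀ d, (cN k d : ℤ) ≤ ⌈x d⌉ - 1 ∧ ⌈x d⌉ ≤ (cN k d : ℤ) + (sN k : ℤ) := by
      intro k hk d
      constructor
      · have h1 : (cN k d : ℝ) < (⌈x d⌉ : ℝ) := lt_of_lt_of_le (hk d).1 (Int.le_ceil _)
        have h2 : (cN k d : ℤ) < ⌈x d⌉ := by exact_mod_cast h1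
        omega
      · have h1 : x d ≤ ((cN k d : ℤ) + (sN k : ℤ) : ℤ) := by
          push_cast
          exact le_of_lt (hk d).2
        exact Int.ceil_le.mpr h1
    set v : Fin 3 → ℕ := fun d => (⌈x d⌉ - 1).toNat with hvdef
    have hv9 : ∀ d, v d < 9 := by
      intro d
      have h1 := (key i hi d).2
      have h2 := hbound i d
      simp only [hvdef]
      omega
    have hvin : ∀ k : Fin 80, (∀ d, cR k d < x d ∧ x d < cR k d + sR k) →
        ∀ d : Fin 3, cN k d ≤ v d ∧ v d + 1 ≤ cN k d + sN k := by
      intro k hk d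
      have h1 := (key k hk d).1
      have h2 := (key k hk d).2
      simp only [hvdef]
      omega
    obtain ⟨u, -, hu⟩ := huniq v hv9
    exact hij ((hu i (hvin i hi)).trans (hu j (hvin j hj)).symm)
  · ext x
    simp only [Set.mem_iUnion, Set.mem_Icc]
    constructor
    · rintro ⟨i, hx⟩
      rw [Cube, Set.mem_Icc] at hx
      constructor
      · intro d
        have h1 : (0 : ℝ) ≤ cN i d := by positivity
        exact le_trans h1 (hx.1 d)
      · intro d
        have h1 := hx.2 d
        have h2 : (cN i d : ℝ) + (sN i : ℝ) ≤ 9 := by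
          have := hbound i d
          have h3 : ((cN i d + sN i : ℕ) : ℝ) ≤ ((9 : ℕ) : ℝ) := by exact_mod_cast this
          push_cast at h3
          linarith
        calc x d ≤ cR i d + sR i := h1
          _ = (cN i d : ℝ) + (sN i : ℝ) := rfl
          _ ≤ 9 := h2
    · intro hx
      have h0 : ∀ d, (0 : ℝ) ≤ x d := fun d => hx.1 d
      have h9 : ∀ d, x d ≤ 9 := fun d => hx.2 d
      set v : Fin 3 → ℕ := fun d => min 8 ⌊x d⌋₊ with hvdef
      have hv9 : ∀ d, v d < 9 := by intro d; simp only [hvdef]; omega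
      obtain ⟨i, hi, -⟩ := huniq v hv9
      refine ⟨i, ?_⟩
      rw [Cube, Set.mem_Icc]
      constructor
      · intro d
        have h1 : (cN i d : ℝ) ≤ (v d : ℝ) := by exact_mod_cast (hi d).1
        have h2 : (v d : ℝ) ≤ (⌊x d⌋₊ : ℝ) := by
          have : v d ≤ ⌊x d⌋₊ := min_le_right _ _
          exact_mod_cast this
        have h3 : (⌊x d⌋₊ : ℝ) ≤ x d := Nat.floor_le (h0 d)
        calc cR i d = (cN i d : ℝ) := rfl
          _ ≤ x d := by linarith
      · intro d
        have h1 : (v d : ℝ) + 1 ≤ (cN i d : ℝ) + (sN i : ℝ) := by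
          have := (hi d).2
          have h2 : ((v d + 1 : ℕ) : ℝ) ≤ ((cN i d + sN i : ℕ) : ℝ) := by exact_mod_cast this
          push_cast at h2
          linarith
        have h2 : x d ≤ (v d : ℝ) + 1 := by
          rcases le_or_gt (⌊x d⌋₊) 8 with h | h
          · have hv : v d = ⌊x d⌋₊ := min_eq_right h
            have := Nat.lt_floor_add_one (x d)
            rw [hv]
            linarith
          · have hv : v d = 8 := min_eq_left (by omega)
            rw [hv]
            norm_num
            linarith [h9 d]
        show x d ≤ cR i d + sR i
        calc x d ≤ (v d : ℝ) + 1 := h2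
          _ ≤ (cN i d : ℝ) + (sN i : ℝ) := h1
          _ = cR i d + sR i := rfl

theorem count_eq (k : ℕ) :
    Nat.card {i : Fin 80 // sR i = (k : ℝ)} = (Finset.univ.filter (fun i : Fin 80 => sN i = k)).card := by
  have e : ∀ i : Fin 80, sR i = (k : ℝ) ↔ sN i = k := by
    intro i
    simp only [sR]
    exact Nat.cast_inj
  rw [Nat.card_congr (Equiv.subtypeEquivRight e), Nat.card_eq_fintype_card,
    Fintype.card_subtype]

theorem stmt17 :
    (9 ^ 3 = 5 ^ 3 + 3 * 4 ^ 3 + 7 * 3 ^ 3 + 22 * 2 ^ 3 + 47) ∧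
    ∃ (c : Fin 80 → Fin 3 → ℝ) (s : Fin 80 → ℝ), IsTiling 3 80 9 c s ∧
      Nat.card {i : Fin 80 // s i = 5} = 1 ∧
      Nat.card {i : Fin 80 // s i = 4} = 3 ∧
      Nat.card {i : Fin 80 // s i = 3} = 7 ∧
      Nat.card {i : Fin 80 // s i = 2} = 22 ∧
      Nat.card {i : Fin 80 // s i = 1} = 47 := by
  refine ⟨by norm_num, cR, sR, tiling, ?_, ?_, ?_, ?_, ?_⟩
  · have h := count_eq 5
    push_cast at h
    rw [h]; decide
  · have h := count_eq 4
    push_cast at h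
    rw [h]; decide
  · have h := count_eq 3
    push_cast at h
    rw [h]; decide
  · have h := count_eq 2
    push_cast at h
    rw [h]; decide
  · have h := count_eq 1
    push_cast at h
    rw [h]; decide
end
end
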